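/- arXiv:2005.06304 — 2 statements merged into one kernel-verified Lean document; each statement's English description precedes it below -/
import Mathlib

section
/- Let (L,R) be a Galois correspondence between concrete categories D and E over a base category B. Then a concrete category X over B is concretely equivalent to Fix(RL) if and only if there exist essentially surjective concrete functors F : D → X and G : E → X such that E(LA,B') = X(FA,GB') (as subsets of B(|A|,|B'|)) for all objects A of D and B' of E. -/
universe u

/-- A quantaloid: a category whose hom-sets are complete lattices and whose
composition preserves arbitrary joins in each variable. -/
structure Quantaloid : Type (u + 1) where
  Obj : Type u
  Hom : Obj → Obj → Type u
  [lat : ∀ S T : Obj, CompleteLattice (Hom S T)]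
  comp : ∀ {S T U : Obj}, Hom T U → Hom S T → Hom S U
  one : ∀ S : Obj, Hom S S
  comp_assoc : ∀ {S T U V : Obj} (w : Hom U V) (v : Hom T U) (u : Hom S T),
      comp (comp w v) u = comp w (comp v u)
  comp_one : ∀ {S T : Obj} (u : Hom S T), comp u (one S) = u
  one_comp : ∀ {S T : Obj} (u : Hom S T), comp (one T) u = u
  comp_sSup : ∀ {S T U : Obj} (v : Hom T U) (s : Set (Hom S T)),
      comp v (sSup s) = ⨆ u ∈ s, comp v u
  sSup_comp : ∀ {S T U : Obj} (s : Set (Hom T U)) (u : Hom S T),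
      comp (sSup s) u = ⨆ v ∈ s, comp v u

attribute [instance] Quantaloid.lat

namespace Quantaloid

variable (Q : Quantaloid.{u})

/-- The left implication `w ↙ u`, characterized by `v ∘ u ≤ w ↔ v ≤ w ↙ u`. -/
def lda {S T U : Q.Obj} (w : Q.Hom S U) (u : Q.Hom S T) : Q.Hom T U :=
  sSup {v | Q.comp v u ≤ w}

/-- The right implication `v ↘ w`, characterized by `v ∘ u ≤ w ↔ u ≤ v ↘ w`. -/
def rda {S T U : Q.Obj} (v : Q.Hom T U) (w : Q.Hom S U) : Q.Hom S T :=
  sSup {u | Q.comp v u ≤ w}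

/-- Transport of a `Q`-arrow along equalities of objects. -/
def cast {S S' T T' : Q.Obj} (hS : S = S') (hT : T = T') (u : Q.Hom S T) : Q.Hom S' T' :=
  hS ▸ hT ▸ u

variable {Q}

theorem comp_mono_left {S T U : Q.Obj} {v v' : Q.Hom T U} (h : v ≤ v') (u : Q.Hom S T) :
    Q.comp v u ≤ Q.comp v' u := by
  have h1 : sSup ({v, v'} : Set (Q.Hom T U)) = v' := by
    rw [sSup_pair]; exact sup_eq_right.mpr h
  calc Q.comp v u ≤ ⨆ x ∈ ({v, v'} : Set (Q.Hom T U)), Q.comp x u :=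
        le_iSup₂ (f := fun x _ => Q.comp x u) v (by simp)
    _ = Q.comp (sSup ({v, v'} : Set (Q.Hom T U))) u := (Q.sSup_comp _ _).symm
    _ = Q.comp v' u := by rw [h1]

theorem comp_mono_right {S T U : Q.Obj} (v : Q.Hom T U) {u u' : Q.Hom S T} (h : u ≤ u') :
    Q.comp v u ≤ Q.comp v u' := by
  have h1 : sSup ({u, u'} : Set (Q.Hom S T)) = u' := by
    rw [sSup_pair]; exact sup_eq_right.mpr h
  calc Q.comp v u ≤ ⨆ x ∈ ({u, u'} : Set (Q.Hom S T)), Q.comp v x :=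
        le_iSup₂ (f := fun x _ => Q.comp v x) u (by simp)
    _ = Q.comp v (sSup ({u, u'} : Set (Q.Hom S T))) := (Q.comp_sSup _ _).symm
    _ = Q.comp v u' := by rw [h1]

theorem comp_lda_le {S T U : Q.Obj} (w : Q.Hom S U) (u : Q.Hom S T) :
    Q.comp (Q.lda w u) u ≤ w := by
  rw [lda, Q.sSup_comp]
  exact iSup₂_le fun v hv => hv

theorem comp_rda_le {S T U : Q.Obj} (v : Q.Hom T U) (w : Q.Hom S U) :
    Q.comp v (Q.rda v w) ≤ w := by
  rw [rda, Q.comp_sSup]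
  exact iSup₂_le fun u hu => hu

theorem le_lda {S T U : Q.Obj} {u : Q.Hom S T} {v : Q.Hom T U} {w : Q.Hom S U} :
    Q.comp v u ≤ w ↔ v ≤ Q.lda w u :=
  ⟨fun h => le_sSup h, fun h => le_trans (comp_mono_left h u) (comp_lda_le w u)⟩

theorem le_rda {S T U : Q.Obj} {u : Q.Hom S T} {v : Q.Hom T U} {w : Q.Hom S U} :
    Q.comp v u ≤ w ↔ u ≤ Q.rda v w :=
  ⟨fun h => le_sSup h, fun h => le_trans (comp_mono_right v h) (comp_rda_le v w)⟩

theorem cast_cast {S S' S'' T T' T'' : Q.Obj} (h1 : S = S') (h2 : T = T')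
    (h3 : S' = S'') (h4 : T' = T'') (u : Q.Hom S T) :
    Q.cast h3 h4 (Q.cast h1 h2 u) = Q.cast (h1.trans h3) (h2.trans h4) u := by
  subst h1; subst h2; subst h3; subst h4; rfl

theorem cast_mono {S S' T T' : Q.Obj} (hS : S = S') (hT : T = T') {u v : Q.Hom S T}
    (h : u ≤ v) : Q.cast hS hT u ≤ Q.cast hS hT v := by
  subst hS; subst hT; exact h

end Quantaloid
/-! ## Quantaloid-enriched categories -/

/-- A `Q`-category: a class of objects with extents and hom-arrows in `Q`. -/
structure QCat (Q : Quantaloid.{u}) : Type (u + 1) where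
  Obj : Type u
  ext : Obj → Q.Obj
  hom : ∀ X Y : Obj, Q.Hom (ext X) (ext Y)
  one_le : ∀ X, Q.one (ext X) ≤ hom X X
  comp_le : ∀ X Y Z, Q.comp (hom Y Z) (hom X Y) ≤ hom X Z

/-- A `Q`-relation between (the object classes of) two `Q`-categories. -/
abbrev QRel (Q : Quantaloid.{u}) (D E : QCat Q) : Type u :=
  ∀ (X : D.Obj) (Y : E.Obj), Q.Hom (D.ext X) (E.ext Y)

/-- The hom `Q`-relation of a `Q`-category. -/
def QCat.homRel {Q : Quantaloid.{u}} (E : QCat Q) : QRel Q E E := fun X Y => E.hom X Y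

/-- Composition of `Q`-relations. -/
def QRel.comp {Q : Quantaloid.{u}} {C D E : QCat Q} (Ψ : QRel Q D E) (Φ : QRel Q C D) :
    QRel Q C E :=
  fun X Z => ⨆ Y : D.Obj, Q.comp (Ψ Y Z) (Φ X Y)

/-- Left implication of `Q`-relations: `(Ξ ↙ Φ)(Y,Z) = ⋀_X Ξ(X,Z) ↙ Φ(X,Y)`. -/
def QRel.lda {Q : Quantaloid.{u}} {C D E : QCat Q} (Ξ : QRel Q C E) (Φ : QRel Q C D) :
    QRel Q D E :=
  fun Y Z => ⨅ X : C.Obj, Q.lda (Ξ X Z) (Φ X Y)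

/-- Right implication of `Q`-relations: `(Ψ ↘ Ξ)(X,Y) = ⋀_Z Ψ(Y,Z) ↘ Ξ(X,Z)`. -/
def QRel.rda {Q : Quantaloid.{u}} {C D E : QCat Q} (Ψ : QRel Q D E) (Ξ : QRel Q C E) :
    QRel Q C D :=
  fun X Y => ⨅ Z : E.Obj, Q.rda (Ψ Y Z) (Ξ X Z)

/-- A `Q`-relation between `Q`-categories is a `Q`-distributor if `E ∘ Φ ∘ D ≤ Φ`. -/
def IsDist {Q : Quantaloid.{u}} {D E : QCat Q} (Φ : QRel Q D E) : Prop :=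
  QRel.comp E.homRel (QRel.comp Φ D.homRel) ≤ Φ

/-- The one-object `Q`-category on an object `T` of `Q`, with hom `1_T`. -/
def singleQCat (Q : Quantaloid.{u}) (T : Q.Obj) : QCat Q where
  Obj := PUnit
  ext _ := T
  hom _ _ := Q.one T
  one_le _ := le_rfl
  comp_le _ _ _ := le_of_eq (Q.comp_one _)

/-- A sink of extent `T` on a `Q`-category `E`: a `Q`-relation `E₀ ⇸ {T}`. -/
abbrev Sink {Q : Quantaloid.{u}} (E : QCat Q) (T : Q.Obj) : Type u :=
  QRel Q E (singleQCat Q T)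

/-- A source of extent `T` on a `Q`-category `E`: a `Q`-relation `{T} ⇸ E₀`. -/
abbrev Source {Q : Quantaloid.{u}} (E : QCat Q) (T : Q.Obj) : Type u :=
  QRel Q (singleQCat Q T) E

/-- `Y` is the supremum of the sink `σ`: `Y` has extent `T` and `E(Y,−) = E ↙ σ`. -/
structure IsSup {Q : Quantaloid.{u}} (E : QCat Q) {T : Q.Obj} (σ : Sink E T) (Y : E.Obj) :
    Prop where
  ext : E.ext Y = T
  hom : ∀ Z : E.Obj, Q.cast ext rfl (E.hom Y Z) = QRel.lda E.homRel σ PUnit.unit Z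

/-- `Y` is the infimum of the source `τ`: `Y` has extent `T` and `E(−,Y) = τ ↘ E`. -/
structure IsInf {Q : Quantaloid.{u}} (E : QCat Q) {T : Q.Obj} (τ : Source E T) (Y : E.Obj) :
    Prop where
  ext : E.ext Y = T
  hom : ∀ Z : E.Obj, Q.cast rfl ext (E.hom Z Y) = QRel.rda τ E.homRel Z PUnit.unit

/-- A `Q`-category is total if every sink on it has a supremum. -/
def QCat.Total {Q : Quantaloid.{u}} (E : QCat Q) : Prop :=
  ∀ (T : Q.Obj) (σ : Sink E T), ∃ Y : E.Obj, IsSup E σ Y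

/-- A `Q`-functor between `Q`-categories. -/
structure QFun {Q : Quantaloid.{u}} (D E : QCat Q) : Type u where
  obj : D.Obj → E.Obj
  ext : ∀ X, E.ext (obj X) = D.ext X
  hom_le : ∀ X Y, D.hom X Y ≤ Q.cast (ext X) (ext Y) (E.hom (obj X) (obj Y))

/-- The graph `F_♮(X,Y) = E(FX,Y)` of a `Q`-functor. -/
def QFun.graph {Q : Quantaloid.{u}} {D E : QCat Q} (F : QFun D E) : QRel Q D E :=
  fun X Y => Q.cast (F.ext X) rfl (E.hom (F.obj X) Y)

/-- The cograph `F^♮(Y,X) = E(Y,FX)` of a `Q`-functor. -/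
def QFun.cograph {Q : Quantaloid.{u}} {D E : QCat Q} (F : QFun D E) : QRel Q E D :=
  fun Y X => Q.cast rfl (F.ext X) (E.hom Y (F.obj X))

/-- `Y` is the colimit of `F` weighted by the sink `σ`: `E(Y,−) = F_♮ ↙ σ`. -/
structure IsColim {Q : Quantaloid.{u}} {D E : QCat Q} (F : QFun D E) {T : Q.Obj}
    (σ : Sink D T) (Y : E.Obj) : Prop where
  ext : E.ext Y = T
  hom : ∀ Z : E.Obj, Q.cast ext rfl (E.hom Y Z) = QRel.lda F.graph σ PUnit.unit Z

/-- `Y` is the limit of `F` weighted by the source `τ`: `E(−,Y) = τ ↘ F^♮`. -/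
structure IsLim {Q : Quantaloid.{u}} {D E : QCat Q} (F : QFun D E) {T : Q.Obj}
    (τ : Source D T) (Y : E.Obj) : Prop where
  ext : E.ext Y = T
  hom : ∀ Z : E.Obj, Q.cast rfl ext (E.hom Z Y) = QRel.rda τ F.cograph Z PUnit.unit

/-- A `Q`-functor is dense if every object of its codomain is a weighted colimit of it. -/
def QFun.Dense {Q : Quantaloid.{u}} {D E : QCat Q} (F : QFun D E) : Prop :=
  ∀ Y : E.Obj, ∃ (T : Q.Obj) (σ : Sink D T), IsColim F σ Y

/-- A `Q`-functor is codense if every object of its codomain is a weighted limit of it. -/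
def QFun.Codense {Q : Quantaloid.{u}} {D E : QCat Q} (F : QFun D E) : Prop :=
  ∀ Y : E.Obj, ∃ (T : Q.Obj) (τ : Source D T), IsLim F τ Y

/-- The underlying (pre)order of a `Q`-category: `X ≤ Y` iff `|X| = |Y|` and
`1_{|X|} ≤ E(X,Y)`. -/
def QCat.le {Q : Quantaloid.{u}} (E : QCat Q) (X Y : E.Obj) : Prop :=
  ∃ h : E.ext X = E.ext Y, Q.cast rfl h (Q.one (E.ext X)) ≤ E.hom X Y

/-- `X ≅ Y` in the underlying order of a `Q`-category. -/
def QCat.iso {Q : Quantaloid.{u}} (E : QCat Q) (X Y : E.Obj) : Prop :=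
  E.le X Y ∧ E.le Y X

/-- A `Q`-category is separated if isomorphic objects are equal. -/
def QCat.Separated {Q : Quantaloid.{u}} (E : QCat Q) : Prop :=
  ∀ X Y : E.Obj, E.iso X Y → X = Y

/-- The identity `Q`-functor. -/
def QFun.id {Q : Quantaloid.{u}} (E : QCat Q) : QFun E E where
  obj X := X
  ext _ := rfl
  hom_le _ _ := le_rfl

/-- Composition of `Q`-functors. -/
def QFun.comp {Q : Quantaloid.{u}} {C D E : QCat Q} (G : QFun D E) (F : QFun C D) :
    QFun C E where
  obj X := G.obj (F.obj X)
  ext X := (G.ext (F.obj X)).trans (F.ext X)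
  hom_le X Y := by
    refine le_trans (F.hom_le X Y) ?_
    refine le_trans (Quantaloid.cast_mono (F.ext X) (F.ext Y)
      (G.hom_le (F.obj X) (F.obj Y))) ?_
    rw [Quantaloid.cast_cast]

/-- The full `Q`-subcategory of `E` on the objects satisfying `P`. -/
def QCat.full {Q : Quantaloid.{u}} (E : QCat Q) (P : E.Obj → Prop) : QCat Q where
  Obj := {X : E.Obj // P X}
  ext X := E.ext X.1
  hom X Y := E.hom X.1 Y.1
  one_le X := E.one_le X.1
  comp_le X Y Z := E.comp_le X.1 Y.1 Z.1

/-- The inclusion `Q`-functor of a full `Q`-subcategory. -/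
def QCat.incl {Q : Quantaloid.{u}} (E : QCat Q) (P : E.Obj → Prop) :
    QFun (E.full P) E where
  obj X := X.1
  ext _ := rfl
  hom_le _ _ := le_rfl

/-- The full `Q`-subcategory of fixed points of an endo-`Q`-functor. -/
def QCat.fix {Q : Quantaloid.{u}} (E : QCat Q) (F : QFun E E) : QCat Q :=
  E.full (fun X => E.iso (F.obj X) X)

/-- Adjoint `Q`-functors: `L ⊣ R` iff `E(LX,Y) = D(X,RY)`. -/
def QAdj {Q : Quantaloid.{u}} {D E : QCat Q} (L : QFun D E) (R : QFun E D) : Prop :=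
  ∀ (X : D.Obj) (Y : E.Obj), L.graph X Y = Q.cast rfl (R.ext Y) (D.hom X (R.obj Y))

/-- An essentially surjective `Q`-functor. -/
def QFun.EssSurj {Q : Quantaloid.{u}} {D E : QCat Q} (F : QFun D E) : Prop :=
  ∀ Y : E.Obj, ∃ X : D.Obj, E.iso Y (F.obj X)

/-- Equivalence of `Q`-categories. -/
def QEquiv {Q : Quantaloid.{u}} (D E : QCat Q) : Prop :=
  ∃ (F : QFun D E) (G : QFun E D),
    (∀ X, D.iso (G.obj (F.obj X)) X) ∧ (∀ Y, E.iso (F.obj (G.obj Y)) Y)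

/-- Isomorphism of `Q`-categories. -/
def QIso {Q : Quantaloid.{u}} (D E : QCat Q) : Prop :=
  ∃ (F : QFun D E) (G : QFun E D),
    (∀ X, G.obj (F.obj X) = X) ∧ (∀ Y, F.obj (G.obj Y) = Y)

/-- Tensor: `Y = f ⊗ X` iff `E(Y,−) = E(X,−) ↙ f`. -/
structure IsTensor {Q : Quantaloid.{u}} (E : QCat Q) {T : Q.Obj} (X : E.Obj)
    (f : Q.Hom (E.ext X) T) (Y : E.Obj) : Prop where
  ext : E.ext Y = T
  hom : ∀ Z : E.Obj, Q.cast ext rfl (E.hom Y Z) = Q.lda (E.hom X Z) f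

/-- Cotensor: `Y = g ⤳ X` iff `E(−,Y) = g ↘ E(−,X)`. -/
structure IsCotensor {Q : Quantaloid.{u}} (E : QCat Q) {T : Q.Obj} (X : E.Obj)
    (g : Q.Hom T (E.ext X)) (Y : E.Obj) : Prop where
  ext : E.ext Y = T
  hom : ∀ Z : E.Obj, Q.cast rfl ext (E.hom Z Y) = Q.rda g (E.hom Z X)
/-! ## The Isbell adjunction and its fixed points -/

section MCat

variable {Q : Quantaloid.{u}} {D E : QCat Q}

/-- The Isbell upper map of a `Q`-distributor `Φ : D ⇸ E` on (pre)sheaves: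
`Φ↑σ = Φ ↙ σ`. -/
def isbellUp (Φ : QRel Q D E) {T : Q.Obj} (σ : Sink D T) : Source E T :=
  QRel.lda Φ σ

/-- The Isbell lower map of a `Q`-distributor `Φ : D ⇸ E` on (co)presheaves:
`Φ↓τ = τ ↘ Φ`. -/
def isbellDown (Φ : QRel Q D E) {T : Q.Obj} (τ : Source E T) : Sink D T :=
  QRel.rda τ Φ

/-- `MΦ = Fix(Φ↓Φ↑)`: the full `Q`-subcategory of the presheaf `Q`-category of `D`
consisting of the presheaves fixed by the Isbell adjunction induced by `Φ`. -/
def MCat (Φ : QRel Q D E) : QCat Q where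
  Obj := Σ T : Q.Obj, {σ : Sink D T // IsDist σ ∧ isbellDown Φ (isbellUp Φ σ) = σ}
  ext p := p.1
  hom p q := QRel.lda q.2.1 p.2.1 PUnit.unit PUnit.unit
  one_le p := by
    refine le_iInf fun X => Quantaloid.le_lda.mp ?_
    exact le_of_eq (Q.one_comp _)
  comp_le p q r := by
    refine le_iInf fun X => Quantaloid.le_lda.mp ?_
    erw [Q.comp_assoc]
    have h1 : Q.comp (QRel.lda q.2.1 p.2.1 PUnit.unit PUnit.unit) (p.2.1 X PUnit.unit) ≤
        q.2.1 X PUnit.unit := by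
      refine le_trans (Quantaloid.comp_mono_left (iInf_le _ X) _) ?_
      exact Quantaloid.comp_lda_le _ _
    refine le_trans (Quantaloid.comp_mono_right _ h1) ?_
    refine le_trans (Quantaloid.comp_mono_left (iInf_le _ X) _) ?_
    exact Quantaloid.comp_lda_le _ _

end MCat
/-! ## Concrete categories over a base category -/

open CategoryTheory

/-- Transport of a morphism of `B` along equalities of objects. -/
def hcast {B : Type u} [Category.{u} B] {S S' T T' : B} (hS : S = S') (hT : T = T')
    (f : S ⟶ T) : S' ⟶ T' :=
  hS ▸ hT ▸ f

/-- Transport of a set of morphisms of `B` along equalities of objects. -/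
def scast {B : Type u} [Category.{u} B] {S S' T T' : B} (hS : S = S') (hT : T = T')
    (s : Set (S ⟶ T)) : Set (S' ⟶ T') :=
  hcast hS hT '' s

theorem hcast_hcast {B : Type u} [Category.{u} B] {S S' S'' T T' T'' : B}
    (h1 : S = S') (h2 : T = T') (h3 : S' = S'') (h4 : T' = T'') (f : S ⟶ T) :
    hcast h3 h4 (hcast h1 h2 f) = hcast (h1.trans h3) (h2.trans h4) f := by
  subst h1; subst h2; subst h3; subst h4; rfl

/-- A concrete category over a base category `B`, described by its objects, extents
and hom-sets of `B`-morphisms. -/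
structure ConcCat (B : Type u) [Category.{u} B] : Type (u + 1) where
  Obj : Type u
  ext : Obj → B
  hom : ∀ X Y : Obj, Set (ext X ⟶ ext Y)
  id_mem : ∀ X, 𝟙 (ext X) ∈ hom X X
  comp_mem : ∀ {X Y Z : Obj} {f : ext X ⟶ ext Y} {g : ext Y ⟶ ext Z},
      f ∈ hom X Y → g ∈ hom Y Z → f ≫ g ∈ hom X Z

variable {B : Type u} [Category.{u} B]

/-- A concrete functor over `B`. -/
structure ConcFun (D E : ConcCat B) : Type u where
  obj : D.Obj → E.Obj
  ext : ∀ X, E.ext (obj X) = D.ext X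
  mem : ∀ {X Y : D.Obj} {f : D.ext X ⟶ D.ext Y}, f ∈ D.hom X Y →
      hcast (ext X).symm (ext Y).symm f ∈ E.hom (obj X) (obj Y)

/-- The underlying (pre)order of a concrete category: `X ≤ Y` iff `|X| = |Y|` and
`1_{|X|} ∈ E(X,Y)`. -/
def ConcCat.le (E : ConcCat B) (X Y : E.Obj) : Prop :=
  ∃ h : E.ext X = E.ext Y, hcast rfl h (𝟙 (E.ext X)) ∈ E.hom X Y

/-- `X ≅ Y` in the underlying order of a concrete category. -/
def ConcCat.iso (E : ConcCat B) (X Y : E.Obj) : Prop :=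
  E.le X Y ∧ E.le Y X

/-- The identity concrete functor. -/
def ConcFun.id (E : ConcCat B) : ConcFun E E where
  obj X := X
  ext _ := rfl
  mem hf := hf

/-- Composition of concrete functors. -/
def ConcFun.comp {C D E : ConcCat B} (G : ConcFun D E) (F : ConcFun C D) :
    ConcFun C E where
  obj X := G.obj (F.obj X)
  ext X := (G.ext (F.obj X)).trans (F.ext X)
  mem {X Y f} hf := by
    have h := G.mem (F.mem hf)
    rw [hcast_hcast] at h
    exact h

/-- The full concrete subcategory on the objects satisfying `P`. -/
def ConcCat.full (E : ConcCat B) (P : E.Obj → Prop) : ConcCat B where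
  Obj := {X : E.Obj // P X}
  ext X := E.ext X.1
  hom X Y := E.hom X.1 Y.1
  id_mem X := E.id_mem X.1
  comp_mem hf hg := E.comp_mem hf hg

/-- The inclusion concrete functor of a full subcategory. -/
def ConcCat.incl (E : ConcCat B) (P : E.Obj → Prop) : ConcFun (E.full P) E where
  obj X := X.1
  ext _ := rfl
  mem hf := hf

/-- The full subcategory of fixed points of an endo concrete functor. -/
def ConcCat.fix (E : ConcCat B) (F : ConcFun E E) : ConcCat B :=
  E.full (fun X => E.iso (F.obj X) X)

/-- A Galois correspondence `(L,R)` between concrete categories: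
`E(LX,Y) = D(X,RY)` as subsets of `B(|X|,|Y|)`. -/
def Galois {D E : ConcCat B} (L : ConcFun D E) (R : ConcFun E D) : Prop :=
  ∀ (X : D.Obj) (Y : E.Obj),
    scast (L.ext X) rfl (E.hom (L.obj X) Y) = scast rfl (R.ext Y) (D.hom X (R.obj Y))

/-- An essentially surjective concrete functor. -/
def ConcFun.EssSurj {D E : ConcCat B} (F : ConcFun D E) : Prop :=
  ∀ Y : E.Obj, ∃ X : D.Obj, E.iso Y (F.obj X)

/-- Concrete equivalence of concrete categories. -/
def ConcEquiv (D E : ConcCat B) : Prop :=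
  ∃ (F : ConcFun D E) (G : ConcFun E D),
    (∀ X, D.iso (G.obj (F.obj X)) X) ∧ (∀ Y, E.iso (F.obj (G.obj Y)) Y)

/-- `Y` is an initial lifting of the `E`-structured source `(g_i : T → |X_i|)`. -/
structure IsInitialLifting (E : ConcCat B) {T : B} {ι : Type u} (X : ι → E.Obj)
    (g : ∀ i, T ⟶ E.ext (X i)) (Y : E.Obj) : Prop where
  ext : E.ext Y = T
  mem : ∀ i, hcast ext.symm rfl (g i) ∈ E.hom Y (X i)
  initial : ∀ (Z : E.Obj) (f : E.ext Z ⟶ T),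
      (∀ i, f ≫ g i ∈ E.hom Z (X i)) → hcast rfl ext.symm f ∈ E.hom Z Y

/-- `Y` is a final lifting of the `E`-structured sink `(f_i : |X_i| → T)`. -/
structure IsFinalLifting (E : ConcCat B) {T : B} {ι : Type u} (X : ι → E.Obj)
    (f : ∀ i, E.ext (X i) ⟶ T) (Y : E.Obj) : Prop where
  ext : E.ext Y = T
  mem : ∀ i, hcast rfl ext.symm (f i) ∈ E.hom (X i) Y
  final : ∀ (Z : E.Obj) (g : T ⟶ E.ext Z),
      (∀ i, f i ≫ g ∈ E.hom (X i) Z) → hcast ext.symm rfl g ∈ E.hom Y Z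

/-- A concrete category is topological over `B` if every structured source admits
an initial lifting. -/
def Topological (E : ConcCat B) : Prop :=
  ∀ (T : B) (ι : Type u) (X : ι → E.Obj) (g : ∀ i, T ⟶ E.ext (X i)),
    ∃ Y : E.Obj, IsInitialLifting E X g Y

/-- A concrete functor `F : D → E` is initially dense if every object of `E` is the
domain of an initial source with codomains in the image of `F`. -/
def InitiallyDense {D E : ConcCat B} (F : ConcFun D E) : Prop :=
  ∀ Y : E.Obj, ∃ (ι : Type u) (X : ι → D.Obj) (g : ∀ i, E.ext Y ⟶ E.ext (F.obj (X i))),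
    (∀ i, g i ∈ E.hom Y (F.obj (X i))) ∧
    ∀ (Z : E.Obj) (f : E.ext Z ⟶ E.ext Y),
      (∀ i, f ≫ g i ∈ E.hom Z (F.obj (X i))) → f ∈ E.hom Z Y

/-- A concrete functor `F : D → E` is finally dense if every object of `E` is the
codomain of a final sink with domains in the image of `F`. -/
def FinallyDense {D E : ConcCat B} (F : ConcFun D E) : Prop :=
  ∀ Y : E.Obj, ∃ (ι : Type u) (X : ι → D.Obj) (f : ∀ i, E.ext (F.obj (X i)) ⟶ E.ext Y),
    (∀ i, f i ∈ E.hom (F.obj (X i)) Y) ∧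
    ∀ (Z : E.Obj) (g : E.ext Y ⟶ E.ext Z),
      (∀ i, f i ≫ g ∈ E.hom (F.obj (X i)) Z) → g ∈ E.hom Y Z
/-! ## The free quantaloid and the `QB`-category associated to a concrete category -/

/-- The free quantaloid on a category `B`: hom-lattices are powersets of hom-sets,
with elementwise composition. -/
def freeQuantaloid (B : Type u) [Category.{u} B] : Quantaloid.{u} where
  Obj := B
  Hom S T := Set (S ⟶ T)
  lat _ _ := inferInstance
  comp := fun {S T U} g f => {h | ∃ a ∈ f, ∃ b ∈ g, a ≫ b = h}
  one S := {𝟙 S}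
  comp_assoc := by
    intro S T U V w v u
    ext h
    constructor
    · rintro ⟨a, ha, b, ⟨c, hc, d, hd, rfl⟩, rfl⟩
      exact ⟨a ≫ c, ⟨a, ha, c, hc, rfl⟩, d, hd, by simp⟩
    · rintro ⟨a, ⟨c, hc, e, he, rfl⟩, b, hb, rfl⟩
      exact ⟨c, hc, e ≫ b, ⟨e, he, b, hb, rfl⟩, by simp⟩
  comp_one := by
    intro S T u
    ext h
    simp
  one_comp := by
    intro S T u
    ext h
    simp
  comp_sSup := by
    intro S T U v s
    ext h
    simp only [Set.sSup_eq_sUnion, Set.mem_sUnion, Set.iSup_eq_iUnion, Set.mem_iUnion,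
      Set.mem_setOf_eq]
    constructor
    · rintro ⟨a, ⟨t, ht, hat⟩, b, hb, rfl⟩
      exact ⟨t, ht, a, hat, b, hb, rfl⟩
    · rintro ⟨t, ht, a, hat, b, hb, rfl⟩
      exact ⟨a, ⟨t, ht, hat⟩, b, hb, rfl⟩
  sSup_comp := by
    intro S T U s u
    ext h
    simp only [Set.sSup_eq_sUnion, Set.mem_sUnion, Set.iSup_eq_iUnion, Set.mem_iUnion,
      Set.mem_setOf_eq]
    constructor
    · rintro ⟨a, ha, b, ⟨t, ht, hbt⟩, rfl⟩
      exact ⟨t, ht, a, ha, b, hbt, rfl⟩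
    · rintro ⟨t, ht, a, ha, b, hbt, rfl⟩
      exact ⟨a, ha, b, ⟨t, ht, hbt⟩, rfl⟩

variable {B : Type u} [Category.{u} B]

instance {S T : B} : Membership (S ⟶ T) ((freeQuantaloid B).Hom S T) :=
  inferInstanceAs (Membership (S ⟶ T) (Set (S ⟶ T)))

theorem mem_qcast {S S' T T' : B} (hS : S = S') (hT : T = T')
    (s : Set (S ⟶ T)) (f : S' ⟶ T') :
    f ∈ (freeQuantaloid B).cast hS hT s ↔ hcast hS.symm hT.symm f ∈ s := by
  subst hS; subst hT; exact Iff.rfl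

/-- The `QB`-category associated to a concrete category over `B`. -/
def ConcCat.bar (E : ConcCat B) : QCat (freeQuantaloid B) where
  Obj := E.Obj
  ext := E.ext
  hom := E.hom
  one_le X := by
    intro h hh
    rcases hh with rfl
    exact E.id_mem X
  comp_le X Y Z := by
    rintro h ⟨a, ha, b, hb, rfl⟩
    exact E.comp_mem ha hb

/-- The `QB`-functor associated to a concrete functor over `B`. -/
def ConcFun.bar {D E : ConcCat B} (F : ConcFun D E) : QFun D.bar E.bar where
  obj := F.obj
  ext := F.ext
  hom_le X Y := by
    intro f hf
    exact (mem_qcast (F.ext X) (F.ext Y) _ f).mpr (F.mem hf)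

/-- The source on the `QB`-category `Ē` associated to an `E`-structured source
`(g_i : T → |X_i|)`, given by `τ̄(X) = {g_i ∣ X_i = X}`. -/
def barSource (E : ConcCat B) {T : B} {ι : Type u} (X : ι → E.Obj)
    (g : ∀ i, T ⟶ E.ext (X i)) : Source E.bar T :=
  fun _ Z => {f | ∃ (i : ι) (h : X i = Z), hcast rfl (congrArg E.ext h) (g i) = f}

/-- The sink on the `QB`-category `Ē` associated to an `E`-structured sink
`(f_i : |X_i| → T)`, given by `σ̄(X) = {f_i ∣ X_i = X}`. -/
def barSink (E : ConcCat B) {T : B} {ι : Type u} (X : ι → E.Obj)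
    (f : ∀ i, E.ext (X i) ⟶ T) : Sink E.bar T :=
  fun Z _ => {h | ∃ (i : ι) (hE : X i = Z), hcast (congrArg E.ext hE) rfl (f i) = h}
namespace FixAux

/-- Extent-flexible membership in a hom-set of a concrete category. -/
def Mem (E : ConcCat B) (X Y : E.Obj) {S T : B} (f : S ⟶ T) : Prop :=
  ∃ (hS : S = E.ext X) (hT : T = E.ext Y), hcast hS hT f ∈ E.hom X Y

theorem mem_scast {S S' T T' : B} (hS : S = S') (hT : T = T') (s : Set (S ⟶ T))
    (f : S' ⟶ T') : f ∈ scast hS hT s ↔ hcast hS.symm hT.symm f ∈ s := by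
  subst hS; subst hT
  constructor
  · rintro ⟨g, hg, rfl⟩; exact hg
  · intro h; exact ⟨f, h, rfl⟩

theorem Mem_iff_of_scast_eq {E₁ E₂ : ConcCat B} {X₁ Y₁ : E₁.Obj} {X₂ Y₂ : E₂.Obj} {U V : B}
    (h1 : E₁.ext X₁ = U) (h2 : E₁.ext Y₁ = V) (h3 : E₂.ext X₂ = U) (h4 : E₂.ext Y₂ = V)
    (h : scast h1 h2 (E₁.hom X₁ Y₁) = scast h3 h4 (E₂.hom X₂ Y₂))
    {S T : B} (f : S ⟶ T) : Mem E₁ X₁ Y₁ f ↔ Mem E₂ X₂ Y₂ f := by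
  constructor
  · rintro ⟨hS, hT, hf⟩
    subst hS; subst hT
    have hm : hcast h1 h2 f ∈ scast h1 h2 (E₁.hom X₁ Y₁) := ⟨f, hf, rfl⟩
    rw [h] at hm
    have hm2 := (mem_scast h3 h4 _ _).mp hm
    rw [hcast_hcast] at hm2
    exact ⟨h1.trans h3.symm, h2.trans h4.symm, hm2⟩
  · rintro ⟨hS, hT, hf⟩
    subst hS; subst hT
    have hm : hcast h3 h4 f ∈ scast h3 h4 (E₂.hom X₂ Y₂) := ⟨f, hf, rfl⟩
    rw [← h] at hm
    have hm2 := (mem_scast h1 h2 _ _).mp hm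
    rw [hcast_hcast] at hm2
    exact ⟨h3.trans h1.symm, h4.trans h2.symm, hm2⟩

theorem scast_eq_of_Mem_iff {E₁ E₂ : ConcCat B} {X₁ Y₁ : E₁.Obj} {X₂ Y₂ : E₂.Obj} {U V : B}
    (h1 : E₁.ext X₁ = U) (h2 : E₁.ext Y₁ = V) (h3 : E₂.ext X₂ = U) (h4 : E₂.ext Y₂ = V)
    (h : ∀ f : U ⟶ V, Mem E₁ X₁ Y₁ f ↔ Mem E₂ X₂ Y₂ f) :
    scast h1 h2 (E₁.hom X₁ Y₁) = scast h3 h4 (E₂.hom X₂ Y₂) := by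
  ext f
  rw [mem_scast, mem_scast]
  constructor
  · intro hf
    obtain ⟨_, _, hf'⟩ := (h f).mp ⟨h1.symm, h2.symm, hf⟩
    exact hf'
  · intro hf
    obtain ⟨_, _, hf'⟩ := (h f).mpr ⟨h3.symm, h4.symm, hf⟩
    exact hf'

theorem le_of_Mem_id {E : ConcCat B} {X Y : E.Obj} {S : B} (h : Mem E X Y (𝟙 S)) :
    E.le X Y := by
  obtain ⟨hS, hT, hf⟩ := h
  subst hS
  exact ⟨hT, hf⟩

theorem Mem_id_of_le {E : ConcCat B} {X Y : E.Obj} (h : E.le X Y) :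
    Mem E X Y (𝟙 (E.ext X)) := by
  obtain ⟨he, hm⟩ := h
  exact ⟨rfl, he, hm⟩

theorem id_hcomp {S T U : B} (h : S = T) (f : T ⟶ U) :
    hcast rfl h (𝟙 S) ≫ f = hcast h.symm rfl f := by
  subst h; show 𝟙 S ≫ f = f; simp

theorem hcomp_id {S T U : B} (h : T = U) (f : S ⟶ T) :
    f ≫ hcast rfl h (𝟙 T) = hcast rfl h f := by
  subst h; show f ≫ 𝟙 T = f; simp

theorem Mem_le_left {E : ConcCat B} {X X' Y : E.Obj} (h : E.le X X') {S T : B} {f : S ⟶ T}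
    (hf : Mem E X' Y f) : Mem E X Y f := by
  obtain ⟨he, hid⟩ := h
  obtain ⟨hS, hT, hm⟩ := hf
  subst hS; subst hT
  refine ⟨he.symm, rfl, ?_⟩
  rw [← id_hcomp he f]
  exact E.comp_mem hid hm

theorem Mem_le_right {E : ConcCat B} {X Y Y' : E.Obj} {S T : B} {f : S ⟶ T}
    (hf : Mem E X Y f) (h : E.le Y Y') : Mem E X Y' f := by
  obtain ⟨he, hid⟩ := h
  obtain ⟨hS, hT, hm⟩ := hf
  subst hS; subst hT
  refine ⟨rfl, he, ?_⟩
  rw [← hcomp_id he f]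
  exact E.comp_mem hm hid

theorem memM {D E : ConcCat B} (F : ConcFun D E) {X Y : D.Obj} {S T : B} {f : S ⟶ T}
    (h : Mem D X Y f) : Mem E (F.obj X) (F.obj Y) f := by
  obtain ⟨hS, hT, hm⟩ := h
  subst hS; subst hT
  exact ⟨(F.ext X).symm, (F.ext Y).symm, F.mem hm⟩

theorem leM {D E : ConcCat B} (F : ConcFun D E) {X Y : D.Obj} (h : D.le X Y) :
    E.le (F.obj X) (F.obj Y) :=
  le_of_Mem_id (memM F (Mem_id_of_le h))

theorem le_transC {E : ConcCat B} {X Y Z : E.Obj} (h : E.le X Y) (h' : E.le Y Z) :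
    E.le X Z :=
  le_of_Mem_id (Mem_le_right (Mem_id_of_le h) h')

theorem iso_symm {E : ConcCat B} {X Y : E.Obj} (h : E.iso X Y) : E.iso Y X := ⟨h.2, h.1⟩

theorem iso_trans {E : ConcCat B} {X Y Z : E.Obj} (h : E.iso X Y) (h' : E.iso Y Z) :
    E.iso X Z := ⟨le_transC h.1 h'.1, le_transC h'.2 h.2⟩

theorem isoM {D E : ConcCat B} (F : ConcFun D E) {X Y : D.Obj} (h : D.iso X Y) :
    E.iso (F.obj X) (F.obj Y) := ⟨leM F h.1, leM F h.2⟩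

theorem galM {D E : ConcCat B} {L : ConcFun D E} {R : ConcFun E D} (gal : Galois L R)
    (A : D.Obj) (B' : E.Obj) {S T : B} (f : S ⟶ T) :
    Mem E (L.obj A) B' f ↔ Mem D A (R.obj B') f :=
  Mem_iff_of_scast_eq (L.ext A) rfl rfl (R.ext B') (gal A B') f

theorem unit_le {D E : ConcCat B} {L : ConcFun D E} {R : ConcFun E D} (gal : Galois L R)
    (A : D.Obj) : D.le A (R.obj (L.obj A)) :=
  le_of_Mem_id ((galM gal A (L.obj A) (𝟙 (E.ext (L.obj A)))).mp ⟨rfl, rfl, E.id_mem _⟩)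

theorem counit_le {D E : ConcCat B} {L : ConcFun D E} {R : ConcFun E D} (gal : Galois L R)
    (B' : E.Obj) : E.le (L.obj (R.obj B')) B' :=
  le_of_Mem_id ((galM gal (R.obj B') B' (𝟙 (D.ext (R.obj B')))).mpr ⟨rfl, rfl, D.id_mem _⟩)

theorem rl_fix {D E : ConcCat B} {L : ConcFun D E} {R : ConcFun E D} (gal : Galois L R)
    (B' : E.Obj) : D.iso (R.obj (L.obj (R.obj B'))) (R.obj B') :=
  ⟨leM R (counit_le gal B'), unit_le gal (R.obj B')⟩

end FixAux

/-- Theorem 7.6: for a Galois correspondence `(L,R)` between concrete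
categories `D` and `E` over `B`, a concrete category `X` over `B` is concretely
equivalent to `Fix(RL)` if and only if there exist essentially surjective concrete
functors `F : D → X` and `G : E → X` with `E(LA,B') = X(FA,GB')` as subsets of
`B(|A|,|B'|)`. -/
theorem concrete_fix_representation {B : Type u} [CategoryTheory.Category.{u} B]
    {D E : ConcCat B} (L : ConcFun D E) (R : ConcFun E D) (gal : Galois L R)
    (X : ConcCat B) :
    ConcEquiv X (ConcCat.fix D (ConcFun.comp R L)) ↔
      ∃ (F : ConcFun D X) (G : ConcFun E X), F.EssSurj ∧ G.EssSurj ∧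
        ∀ (A : D.Obj) (B' : E.Obj),
          scast (L.ext A) rfl (E.hom (L.obj A) B') =
            scast (F.ext A) (G.ext B') (X.hom (F.obj A) (G.obj B')) := by
  constructor
  · rintro ⟨Φ, Ψ, h1, h2⟩
    refine ⟨ConcFun.comp Ψ ⟨fun A => ⟨R.obj (L.obj A), FixAux.rl_fix gal (L.obj A)⟩,
        fun A => (ConcFun.comp R L).ext A, fun hf => (ConcFun.comp R L).mem hf⟩,
      ConcFun.comp Ψ ⟨fun B' => ⟨R.obj B', FixAux.rl_fix gal B'⟩,
        fun B' => R.ext B', fun hf => R.mem hf⟩, ?_, ?_, ?_⟩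
    · intro y
      refine ⟨(Φ.obj y).1, ?_⟩
      have hP : (ConcCat.fix D (ConcFun.comp R L)).iso
          ⟨R.obj (L.obj (Φ.obj y).1), FixAux.rl_fix gal (L.obj (Φ.obj y).1)⟩ (Φ.obj y) :=
        (Φ.obj y).2
      exact FixAux.iso_symm (FixAux.iso_trans (FixAux.isoM Ψ hP) (h1 y))
    · intro y
      refine ⟨L.obj (Φ.obj y).1, ?_⟩
      have hP : (ConcCat.fix D (ConcFun.comp R L)).iso
          ⟨R.obj (L.obj (Φ.obj y).1), FixAux.rl_fix gal (L.obj (Φ.obj y).1)⟩ (Φ.obj y) :=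
        (Φ.obj y).2
      exact FixAux.iso_symm (FixAux.iso_trans (FixAux.isoM Ψ hP) (h1 y))
    · intro A B'
      apply FixAux.scast_eq_of_Mem_iff
      intro f
      constructor
      · intro hf
        have m1 := (FixAux.galM gal A B' f).mp hf
        have m2 : FixAux.Mem D (R.obj (L.obj A)) (R.obj B') f :=
          FixAux.Mem_le_right (FixAux.memM (ConcFun.comp R L) m1) (FixAux.rl_fix gal B').1
        have m3 : FixAux.Mem (ConcCat.fix D (ConcFun.comp R L))
            ⟨R.obj (L.obj A), FixAux.rl_fix gal (L.obj A)⟩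
            ⟨R.obj B', FixAux.rl_fix gal B'⟩ f := m2
        exact FixAux.memM Ψ m3
      · intro hf
        have m1 := FixAux.memM Φ hf
        have m2 := FixAux.Mem_le_right
          (FixAux.Mem_le_left (h2 ⟨R.obj (L.obj A), FixAux.rl_fix gal (L.obj A)⟩).2 m1)
          (h2 ⟨R.obj B', FixAux.rl_fix gal B'⟩).1
        have m3 : FixAux.Mem D (R.obj (L.obj A)) (R.obj B') f := m2
        have m4 : FixAux.Mem D A (R.obj B') f :=
          FixAux.Mem_le_left (FixAux.unit_le gal A) m3
        exact (FixAux.galM gal A B' f).mpr m4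
  · rintro ⟨F, G, hF, hG, hhom⟩
    have hhomM : ∀ (A : D.Obj) (B' : E.Obj) {S T : B} (f : S ⟶ T),
        FixAux.Mem E (L.obj A) B' f ↔ FixAux.Mem X (F.obj A) (G.obj B') f :=
      fun A B' {S T} f =>
        FixAux.Mem_iff_of_scast_eq (L.ext A) rfl (F.ext A) (G.ext B') (hhom A B') f
    have lemFG : ∀ B', X.le (F.obj (R.obj B')) (G.obj B') := fun B' =>
      FixAux.le_of_Mem_id
        ((hhomM (R.obj B') B' _).mp (FixAux.Mem_id_of_le (FixAux.counit_le gal B')))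
    have lemGF : ∀ B', X.le (G.obj B') (F.obj (R.obj B')) := by
      intro B'
      obtain ⟨A, hA⟩ := hF (G.obj B')
      have m1 : FixAux.Mem X (F.obj A) (G.obj B') (𝟙 _) := FixAux.Mem_id_of_le hA.2
      have m2 : FixAux.Mem D A (R.obj B') (𝟙 _) :=
        (FixAux.galM gal A B' _).mp ((hhomM A B' _).mpr m1)
      exact FixAux.le_transC hA.1 (FixAux.leM F (FixAux.le_of_Mem_id m2))
    have unitFG : ∀ A, X.le (F.obj A) (G.obj (L.obj A)) := fun A =>
      FixAux.le_of_Mem_id ((hhomM A (L.obj A) _).mp ⟨rfl, rfl, E.id_mem (L.obj A)⟩)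
    refine ⟨⟨fun x => ⟨R.obj (hG x).choose, FixAux.rl_fix gal _⟩,
        fun x => (R.ext _).trans ((G.ext _).symm.trans ((hG x).choose_spec.1.choose).symm),
        ?_⟩,
      ⟨fun P => F.obj P.1, fun P => F.ext P.1, fun hf => F.mem hf⟩, ?_, ?_⟩
    · intro x y f hf
      have m1 : FixAux.Mem X x y f := ⟨rfl, rfl, hf⟩
      have m2 : FixAux.Mem X (G.obj (hG x).choose) y f :=
        FixAux.Mem_le_left (hG x).choose_spec.2 m1
      have m3 : FixAux.Mem X (G.obj (hG x).choose) (G.obj (hG y).choose) f :=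
        FixAux.Mem_le_right m2 (hG y).choose_spec.1
      have m4 : FixAux.Mem X (F.obj (R.obj (hG x).choose)) (G.obj (hG y).choose) f :=
        FixAux.Mem_le_left (lemFG _) m3
      have m5 : FixAux.Mem D (R.obj (hG x).choose) (R.obj (hG y).choose) f :=
        (FixAux.galM gal _ _ f).mp ((hhomM _ _ f).mpr m4)
      obtain ⟨_, _, hm⟩ := m5
      exact hm
    · intro x
      exact FixAux.iso_trans ⟨lemFG _, lemGF _⟩ (FixAux.iso_symm (hG x).choose_spec)
    · intro P
      have spec : X.iso (F.obj P.1) (G.obj (hG (F.obj P.1)).choose) :=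
        (hG (F.obj P.1)).choose_spec
      have le1 : D.le P.1 (R.obj (hG (F.obj P.1)).choose) :=
        FixAux.le_of_Mem_id ((FixAux.galM gal P.1 _ _).mp
          ((hhomM P.1 _ _).mpr (FixAux.Mem_id_of_le spec.1)))
      have le2 : D.le (R.obj (hG (F.obj P.1)).choose) P.1 := by
        have l1 : X.le (F.obj (R.obj (hG (F.obj P.1)).choose)) (G.obj (L.obj P.1)) :=
          FixAux.le_transC (lemFG _) (FixAux.le_transC spec.2 (unitFG P.1))
        have m : FixAux.Mem D (R.obj (hG (F.obj P.1)).choose) (R.obj (L.obj P.1)) (𝟙 _) :=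
          (FixAux.galM gal _ _ _).mp ((hhomM _ _ _).mpr (FixAux.Mem_id_of_le l1))
        exact FixAux.le_transC (FixAux.le_of_Mem_id m) P.2.1
      exact ⟨le2, le1⟩
end

section
/- Let Q be a quantaloid, D a separated total Q-category, and E a full Q-subcategory of D that is simultaneously dense and codense in D (i.e., the inclusion Q-functor E ↪ D is both dense and codense). Then D is the MacNeille completion of E: D is isomorphic to M(E) := Fix(E↓E↑), the Q-category of fixed points of the Isbell adjunction induced by the identity Q-distributor E : E ⇸ E. -/
universe u

/-! ## Concrete categories over a base category -/

open CategoryTheory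

variable {B : Type u} [Category.{u} B]

variable {B : Type u} [Category.{u} B]

/-! ## Auxiliary material for the MacNeille completion theorem -/

namespace Quantaloid

variable {Q : Quantaloid.{u}}

theorem cast_rfl_rfl {S T : Q.Obj} (h : S = S) (h' : T = T) (u : Q.Hom S T) :
    Q.cast h h' u = u := rfl

theorem lda_antitone {S T U : Q.Obj} (w : Q.Hom S U) {u u' : Q.Hom S T} (h : u ≤ u') :
    Q.lda w u' ≤ Q.lda w u :=
  le_lda.mp (le_trans (comp_mono_right _ h) (comp_lda_le w u'))

theorem rda_antitone {S T U : Q.Obj} {v v' : Q.Hom T U} (h : v ≤ v') (w : Q.Hom S U) :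
    Q.rda v' w ≤ Q.rda v w :=
  le_rda.mp (le_trans (comp_mono_left h _) (comp_rda_le v' w))

theorem comp_iSup {ι : Sort*} {S T U : Q.Obj} (v : Q.Hom T U) (f : ι → Q.Hom S T) :
    Q.comp v (⨆ i, f i) = ⨆ i, Q.comp v (f i) := by
  rw [iSup, Q.comp_sSup, iSup_range]

theorem cast_iInf {ι : Sort*} {S T T' : Q.Obj} (h : T = T') (f : ι → Q.Hom S T) :
    Q.cast rfl h (⨅ i, f i) = ⨅ i, Q.cast rfl h (f i) := by subst h; rfl

theorem cast_lda {S T U U' : Q.Obj} (h : U = U') (w : Q.Hom S U) (u : Q.Hom S T) :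
    Q.cast rfl h (Q.lda w u) = Q.lda (Q.cast rfl h w) u := by subst h; rfl

theorem one_le_cast_iff {S S' : Q.Obj} (h : S = S') (u : Q.Hom S S') :
    Q.one S' ≤ Q.cast h rfl u ↔ Q.cast rfl h (Q.one S) ≤ u := by subst h; rfl

theorem one_cast {S T : Q.Obj} (h : S = T) :
    Q.cast h rfl (Q.one S) = Q.cast rfl h.symm (Q.one T) := by subst h; rfl

end Quantaloid

section MacNeilleAux

variable {Q : Quantaloid.{u}} {D : QCat Q} {P : D.Obj → Prop}

/-- Characterization of homs out of any object via a dense full subcategory. -/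
theorem dense_char (hdense : (D.incl P).Dense) (Y W : D.Obj) :
    D.hom Y W = ⨅ X : {X // P X}, Q.lda (D.hom X.1 W) (D.hom X.1 Y) := by
  obtain ⟨T, σ, hc⟩ := hdense Y
  obtain ⟨hext, hhom⟩ := hc
  subst hext
  have hz : ∀ Z, D.hom Y Z = ⨅ X : {X // P X}, Q.lda (D.hom X.1 Z) (σ X PUnit.unit) :=
    fun Z => hhom Z
  have hA : ∀ X : {X // P X}, σ X PUnit.unit ≤ D.hom X.1 Y := by
    intro X
    have h1 : Q.one (D.ext Y) ≤ Q.lda (D.hom X.1 Y) (σ X PUnit.unit) :=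
      le_trans (D.one_le Y) (le_trans (le_of_eq (hz Y)) (iInf_le _ X))
    have h2 := Quantaloid.le_lda.mpr h1
    erw [Q.one_comp] at h2; exact h2
  refine le_antisymm (le_iInf fun X => Quantaloid.le_lda.mp (D.comp_le X.1 Y W)) ?_
  rw [hz W]
  exact le_iInf fun X => le_trans (iInf_le _ X) (Quantaloid.lda_antitone _ (hA X))

/-- Characterization of homs into any object via a codense full subcategory. -/
theorem codense_char (hcodense : (D.incl P).Codense) (Y W : D.Obj) :
    D.hom W Y = ⨅ Z : {Z // P Z}, Q.rda (D.hom Y Z.1) (D.hom W Z.1) := by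
  obtain ⟨T, τ, hc⟩ := hcodense Y
  obtain ⟨hext, hhom⟩ := hc
  subst hext
  have hz : ∀ Z, D.hom Z Y = ⨅ X : {X // P X}, Q.rda (τ PUnit.unit X) (D.hom Z X.1) :=
    fun Z => hhom Z
  have hA : ∀ X : {X // P X}, τ PUnit.unit X ≤ D.hom Y X.1 := by
    intro X
    have h1 : Q.one (D.ext Y) ≤ Q.rda (τ PUnit.unit X) (D.hom Y X.1) :=
      le_trans (D.one_le Y) (le_trans (le_of_eq (hz Y)) (iInf_le _ X))
    have h2 := Quantaloid.le_rda.mpr h1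
    erw [Q.comp_one] at h2; exact h2
  refine le_antisymm (le_iInf fun X => Quantaloid.le_rda.mp (D.comp_le W Y X.1)) ?_
  rw [hz W]
  exact le_iInf fun X => le_trans (iInf_le _ X) (Quantaloid.rda_antitone (hA X) _)

/-- Extension of a sink on the full subcategory to a sink on `D`. -/
def mySink {T : Q.Obj} (σ : Sink (D.full P) T) : Sink D T :=
  fun W _ => ⨆ X : {X // P X}, Q.comp (σ X PUnit.unit) (D.hom W X.1)

/-- The sink of a supremum of `mySink σ`. -/
theorem sup1 {T : Q.Obj} (σ : Sink (D.full P) T) (Yp : D.Obj)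
    (hext : D.ext Yp = T)
    (hhom : ∀ Z, Q.cast hext rfl (D.hom Yp Z) = QRel.lda D.homRel (mySink σ) PUnit.unit Z)
    (Z : D.Obj) :
    Q.cast hext rfl (D.hom Yp Z)
      = ⨅ X : {X // P X}, Q.lda (D.hom X.1 Z) (σ X PUnit.unit) := by
  subst hext
  have hz : D.hom Yp Z = ⨅ W : D.Obj, Q.lda (D.hom W Z) (mySink σ W PUnit.unit) := hhom Z
  show D.hom Yp Z = _
  rw [hz]
  refine le_antisymm (le_iInf fun X => ?_) (le_iInf fun W => ?_)
  · refine le_trans (iInf_le _ X.1) (Quantaloid.lda_antitone _ ?_)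
    exact le_trans (le_of_eq (Q.comp_one _).symm)
      (le_trans (Quantaloid.comp_mono_right _ (D.one_le X.1)) (le_iSup (fun X' : {X // P X} =>
        Q.comp (σ X' PUnit.unit) (D.hom X.1 X'.1)) X))
  · refine Quantaloid.le_lda.mp ?_
    show Q.comp _ (⨆ X : {X // P X}, Q.comp (σ X PUnit.unit) (D.hom W X.1)) ≤ D.hom W Z
    rw [Quantaloid.comp_iSup]
    refine iSup_le fun X => ?_
    erw [← Q.comp_assoc]
    refine le_trans (Quantaloid.comp_mono_left ?_ _) (D.comp_le W X.1 Z)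
    exact le_trans (Quantaloid.comp_mono_left (iInf_le _ X) _) (Quantaloid.comp_lda_le _ _)

/-- The hom into a supremum of `mySink σ` from subcategory objects, for fixed `σ`. -/
theorem sup2 (hcodense : (D.incl P).Codense) {T : Q.Obj} (σ : Sink (D.full P) T)
    (hfix : isbellDown (D.full P).homRel (isbellUp (D.full P).homRel σ) = σ)
    (Yp : D.Obj) (hext : D.ext Yp = T)
    (hhom : ∀ Z, Q.cast hext rfl (D.hom Yp Z) = QRel.lda D.homRel (mySink σ) PUnit.unit Z)
    (X : {X // P X}) :
    Q.cast rfl hext.symm (σ X PUnit.unit) = D.hom X.1 Yp := by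
  subst hext
  show σ X PUnit.unit = D.hom X.1 Yp
  have h1 := codense_char hcodense Yp X.1
  have h3 : ∀ Z : {Z // P Z}, Q.rda (D.hom Yp Z.1) (D.hom X.1 Z.1)
      = Q.rda (isbellUp (D.full P).homRel σ PUnit.unit Z) (D.hom X.1 Z.1) := by
    intro Z
    have h2 : D.hom Yp Z.1
        = ⨅ X' : {X // P X}, Q.lda (D.hom X'.1 Z.1) (σ X' PUnit.unit) :=
      sup1 σ Yp rfl hhom Z.1
    rw [h2]; rfl
  rw [h1, iInf_congr h3]
  exact (congrFun (congrFun hfix X) PUnit.unit).symm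

/-- The canonical presheaf `D(-,Y)` restricted to the subcategory. -/
def sigmaY (D : QCat Q) (P : D.Obj → Prop) (Y : D.Obj) : Sink (D.full P) (D.ext Y) :=
  fun X _ => D.hom X.1 Y

theorem isDist_sigmaY (Y : D.Obj) : IsDist (sigmaY D P Y) := by
  intro X y
  refine iSup_le fun z => ?_
  show Q.comp (Q.one (D.ext Y)) _ ≤ _
  erw [Q.one_comp]
  refine iSup_le fun X' => ?_
  exact D.comp_le X.1 X'.1 Y

theorem fix_sigmaY (hdense : (D.incl P).Dense) (hcodense : (D.incl P).Codense)
    (Y : D.Obj) :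
    isbellDown (D.full P).homRel (isbellUp (D.full P).homRel (sigmaY D P Y))
      = sigmaY D P Y := by
  funext X y
  have hup : ∀ Z : {Z // P Z},
      isbellUp (D.full P).homRel (sigmaY D P Y) y Z = D.hom Y Z.1 :=
    fun Z => (dense_char hdense Y Z.1).symm
  have h4 : (⨅ Z : {Z // P Z},
        Q.rda (isbellUp (D.full P).homRel (sigmaY D P Y) y Z) (D.hom X.1 Z.1))
      = ⨅ Z : {Z // P Z}, Q.rda (D.hom Y Z.1) (D.hom X.1 Z.1) :=
    iInf_congr fun Z => by rw [hup Z]; rfl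
  exact h4.trans (codense_char hcodense Y X.1).symm

/-- The comparison functor `D → M(E)`. -/
def Fmap (D : QCat Q) (P : D.Obj → Prop) (hdense : (D.incl P).Dense)
    (hcodense : (D.incl P).Codense) : QFun D (MCat (D.full P).homRel) where
  obj Y := ⟨D.ext Y, sigmaY D P Y, isDist_sigmaY Y, fix_sigmaY hdense hcodense Y⟩
  ext _ := rfl
  hom_le Y Y' := by
    show D.hom Y Y' ≤ Q.cast rfl rfl
      (⨅ X : {X // P X}, Q.lda (D.hom X.1 Y') (D.hom X.1 Y))
    rw [Quantaloid.cast_rfl_rfl]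
    exact le_iInf fun X => Quantaloid.le_lda.mp (D.comp_le X.1 Y Y')

/-- The inverse functor `M(E) → D`, sending a fixed presheaf to its supremum. -/
noncomputable def Gmap (D : QCat Q) (P : D.Obj → Prop) (hcodense : (D.incl P).Codense)
    (htot : D.Total) : QFun (MCat (D.full P).homRel) D where
  obj p := (htot p.1 (mySink p.2.1)).choose
  ext p := (htot p.1 (mySink p.2.1)).choose_spec.ext
  hom_le p q := by
    obtain ⟨Tp, σp, hdp, hfp⟩ := p
    obtain ⟨Tq, σq, hdq, hfq⟩ := q
    have hsp := (htot Tp (mySink σp)).choose_spec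
    have hsq := (htot Tq (mySink σq)).choose_spec
    show (⨅ X : {X // P X}, Q.lda (σq X PUnit.unit) (σp X PUnit.unit))
      ≤ Q.cast hsp.ext hsq.ext
        (D.hom (htot Tp (mySink σp)).choose (htot Tq (mySink σq)).choose)
    have e1 : Q.cast hsp.ext hsq.ext
          (D.hom (htot Tp (mySink σp)).choose (htot Tq (mySink σq)).choose)
        = Q.cast rfl hsq.ext (Q.cast hsp.ext rfl
          (D.hom (htot Tp (mySink σp)).choose (htot Tq (mySink σq)).choose)) :=
      (Quantaloid.cast_cast hsp.ext rfl rfl hsq.ext _).symm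
    erw [e1, sup1 σp _ hsp.ext hsp.hom _, Quantaloid.cast_iInf]
    refine le_iInf fun X => le_trans (iInf_le _ X) (le_of_eq ?_)
    erw [Quantaloid.cast_lda]
    congr 1
    erw [← sup2 hcodense σq hfq _ hsq.ext hsq.hom X, Quantaloid.cast_cast]
    rfl

theorem GF_eq (hsep : D.Separated) (htot : D.Total) (hdense : (D.incl P).Dense)
    (hcodense : (D.incl P).Codense) (Y : D.Obj) :
    (Gmap D P hcodense htot).obj ((Fmap D P hdense hcodense).obj Y) = Y := by
  apply hsep
  have hs := (htot (D.ext Y) (mySink (sigmaY D P Y))).choose_spec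
  show D.iso ((htot (D.ext Y) (mySink (sigmaY D P Y))).choose) Y
  set Yp := (htot (D.ext Y) (mySink (sigmaY D P Y))).choose with hYp
  have h1 : ∀ Z, Q.cast hs.ext rfl (D.hom Yp Z) = D.hom Y Z := by
    intro Z
    rw [sup1 (sigmaY D P Y) Yp hs.ext hs.hom Z]
    exact (dense_char hdense Y Z).symm
  constructor
  · exact ⟨hs.ext, (Quantaloid.one_le_cast_iff hs.ext (D.hom Yp Y)).mp
      (by rw [h1 Y]; exact D.one_le Y)⟩
  · refine ⟨hs.ext.symm, ?_⟩
    have h2 : D.hom Y Yp = Q.cast hs.ext rfl (D.hom Yp Yp) := (h1 Yp).symm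
    rw [h2, ← Quantaloid.one_cast hs.ext]
    exact Quantaloid.cast_mono hs.ext rfl (D.one_le Yp)

theorem FG_eq (htot : D.Total) (hdense : (D.incl P).Dense)
    (hcodense : (D.incl P).Codense) (p : (MCat (D.full P).homRel).Obj) :
    (Fmap D P hdense hcodense).obj ((Gmap D P hcodense htot).obj p) = p := by
  obtain ⟨T, σ, hd, hfix⟩ := p
  show (Fmap D P hdense hcodense).obj (htot T (mySink σ)).choose = ⟨T, σ, hd, hfix⟩
  have hs := (htot T (mySink σ)).choose_spec
  generalize hg : (htot T (mySink σ)).choose = Yp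
  rw [hg] at hs
  clear hg
  have hext := hs.ext
  subst hext
  have h2 : sigmaY D P Yp = σ := by
    funext X y
    cases y
    exact (sup2 hcodense σ hfix Yp rfl (fun Z => hs.hom Z) X).symm
  subst h2
  rfl

end MacNeilleAux

/-- Corollary 7.12: if `D` is a separated total `Q`-category and
its full `Q`-subcategory (on a predicate `P`) is simultaneously dense and codense in
`D`, then `D` is the MacNeille completion of this subcategory, i.e. `D` is isomorphic
to `M(E) = Fix(E↓E↑)` for the identity `Q`-distributor `E` of the subcategory. -/
theorem macNeille_completion_of_dense_codense {Q : Quantaloid.{u}} (D : QCat Q)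
    (hsep : D.Separated) (htot : D.Total) (P : D.Obj → Prop)
    (hdense : (D.incl P).Dense) (hcodense : (D.incl P).Codense) :
    QIso D (MCat (D.full P).homRel) :=
  ⟨Fmap D P hdense hcodense, Gmap D P hcodense htot,
    fun Y => GF_eq hsep htot hdense hcodense Y,
    fun p => FG_eq htot hdense hcodense p⟩
end
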